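/- arXiv:nlin/0606049 — 2 statements merged into one kernel-verified Lean document; each statement's English description precedes it below -/
import Mathlib

section
/- Let κ₀ ≈ 0.149 be defined by the relation Ω₀ = (sqrt(7)/6)(1/4 + 16κ₀)^{-1/2} where Ω₀ = (sqrt(1 + 8·(14/81)) - 1)/2. Then κ₀ = (1/16)·(7/(36 Ω₀²) - 1/4), and the slope α_PT = 1/2 - 1/(16 κ₀) of the period-tripling bifurcation line m_PT(ω) = 1/8 + α_PT(ω² - 1/4) + O((ω²-1/4)²) satisfies 0 < α_PT < 1/2. -/
open Real

/-- With `Ω₀ = (√(1+8·(14/81))-1)/2` and `κ₀ = (1/16)(7/(36Ω₀²) - 1/4)`, the defining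
relation `Ω₀ = (√7/6)(1/4+16κ₀)^{-1/2}` holds and the period-tripling slope
`α_PT = 1/2 - 1/(16κ₀)` satisfies `0 < α_PT < 1/2`. -/
theorem period_tripling_slope :
    let Ω₀ : ℝ := (Real.sqrt (1 + 8 * (14 / 81)) - 1) / 2
    let κ₀ : ℝ := (1 / 16) * (7 / (36 * Ω₀ ^ 2) - 1 / 4)
    let αPT : ℝ := 1 / 2 - 1 / (16 * κ₀)
    Ω₀ = (Real.sqrt 7 / 6) / Real.sqrt (1 / 4 + 16 * κ₀) ∧ 0 < αPT ∧ αPT < 1 / 2 := by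
  intro Ω₀ κ₀ αPT
  set s : ℝ := Real.sqrt 193 with hs
  have hs2 : s ^ 2 = 193 := Real.sq_sqrt (by norm_num)
  have hs_lb : (13.8 : ℝ) < s := by
    have : (13.8 : ℝ) = Real.sqrt (13.8 ^ 2) := (Real.sqrt_sq (by norm_num)).symm
    rw [this, hs]
    exact Real.sqrt_lt_sqrt (by norm_num) (by norm_num)
  have hs_ub : s < 14 := by
    have : (14 : ℝ) = Real.sqrt (14 ^ 2) := (Real.sqrt_sq (by norm_num)).symm
    rw [this, hs]
    exact Real.sqrt_lt_sqrt (by norm_num) (by norm_num)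
  have hsqrt : Real.sqrt (1 + 8 * (14 / 81)) = s / 9 := by
    have h1 : (1 + 8 * (14 / 81) : ℝ) = 193 / 81 := by norm_num
    rw [h1, show (193 : ℝ) / 81 = (s / 9) ^ 2 by rw [div_pow, hs2]; norm_num,
      Real.sqrt_sq (by positivity : (0:ℝ) ≤ s / 9)]
  have hΩ : Ω₀ = (s - 9) / 18 := by
    show (Real.sqrt (1 + 8 * (14 / 81)) - 1) / 2 = (s - 9) / 18
    rw [hsqrt]; ring
  have hΩpos : 0 < Ω₀ := by rw [hΩ]; nlinarith
  have hΩ2 : Ω₀ ^ 2 = (s - 9) ^ 2 / 324 := by rw [hΩ]; ring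
  have hΩ2pos : 0 < Ω₀ ^ 2 := by positivity
  have hκ : κ₀ = (1 / 16) * (7 / (36 * Ω₀ ^ 2) - 1 / 4) := rfl
  have hκpos : 0 < κ₀ := by
    rw [hκ, hΩ2]
    have h9 : (0:ℝ) < (s - 9) ^ 2 := by nlinarith
    rw [div_sub_div _ _ (by positivity : (36 * ((s-9)^2/324) : ℝ) ≠ 0) (by norm_num : (4:ℝ) ≠ 0)]
    apply mul_pos (by norm_num)
    apply div_pos
    · nlinarith
    · positivity
  have hkey : 1 / 4 + 16 * κ₀ = 7 / (36 * Ω₀ ^ 2) := by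
    rw [hκ]; field_simp; ring
  constructor
  · have h7 : (0:ℝ) < Real.sqrt 7 := Real.sqrt_pos.mpr (by norm_num)
    have hsq : (1 / 4 + 16 * κ₀ : ℝ) = (Real.sqrt 7 / (6 * Ω₀)) ^ 2 := by
      rw [hkey, show (Real.sqrt 7 / (6 * Ω₀)) ^ 2 = Real.sqrt 7 ^ 2 / (36 * Ω₀ ^ 2) by
        rw [div_pow, mul_pow]; norm_num, Real.sq_sqrt (by norm_num : (0:ℝ) ≤ 7)]
    rw [hsq, Real.sqrt_sq (by positivity)]
    field_simp
  · have hα : αPT = 1 / 2 - 1 / (16 * κ₀) := rfl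
    have h16κ : 16 * κ₀ = 63 / (s - 9) ^ 2 - 1 / 4 := by
      rw [hκ, hΩ2]
      have h9 : ((s - 9) ^ 2 : ℝ) ≠ 0 := by nlinarith
      field_simp
      ring
    have h9 : (0:ℝ) < (s - 9) ^ 2 := by nlinarith
    have hval : 16 * κ₀ = (252 - (s - 9) ^ 2) / (4 * (s - 9) ^ 2) := by
      rw [h16κ, div_sub_div _ _ h9.ne' (by norm_num : (4:ℝ) ≠ 0)]; ring
    have hnum : (0:ℝ) < 252 - (s - 9) ^ 2 := by nlinarith
    have h16pos : 0 < 16 * κ₀ := by linarith [hκpos]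
    constructor
    · rw [hα, sub_pos, hval, one_div_div, div_lt_iff₀ hnum]
      nlinarith
    · rw [hα]
      have : 0 < 1 / (16 * κ₀) := by positivity
      linarith
end

section
/- Consider the linear recurrence relations d_{n+1} + d_n = 0, b_{n+1} + b_n + 16 c_n = 0, a_{n+1} + a_n - (7/4) d_{n+1} = 0, c_{n+1} + c_n + (1/4) b_{n+1} = 0 on sequences indexed by integers n. A sequence (a_n, d_n, c_n, b_n) solving this system is bounded if and only if there exist real constants a and b such that (a_n, d_n, c_n, b_n) = a·((-1)^n, 0, 0, 0) + b·(0, 0, -1/8, 1) for all n. -/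
/-- Bounded solutions of the linearized reduced recurrence
`d_{n+1} + d_n = 0`, `b_{n+1} + b_n + 16c_n = 0`, `a_{n+1} + a_n - (7/4)d_{n+1} = 0`,
`c_{n+1} + c_n + (1/4)b_{n+1} = 0` are exactly
`(a_n, d_n, c_n, b_n) = A((-1)ⁿ, 0, 0, 0) + B(0, 0, -1/8, 1)`. -/
theorem bounded_solutions_linearized_map (a d c b : ℤ → ℝ)
    (h1 : ∀ n : ℤ, d (n + 1) + d n = 0)
    (h2 : ∀ n : ℤ, b (n + 1) + b n + 16 * c n = 0)
    (h3 : ∀ n : ℤ, a (n + 1) + a n - (7 / 4) * d (n + 1) = 0)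
    (h4 : ∀ n : ℤ, c (n + 1) + c n + (1 / 4) * b (n + 1) = 0) :
    (∃ C : ℝ, ∀ n : ℤ, |a n| + |d n| + |c n| + |b n| ≤ C) ↔
      ∃ A B : ℝ, ∀ n : ℤ,
        a n = A * (-1 : ℝ) ^ n ∧ d n = 0 ∧ c n = B * (-1 / 8) ∧ b n = B := by
  have hne : ((-1 : ℝ)) ≠ 0 := by norm_num
  have habs1 : ∀ n : ℤ, |(-1 : ℝ) ^ n| = 1 := by
    intro n
    rcases Int.even_or_odd n with h | h
    · rw [h.neg_one_zpow]; norm_num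
    · rw [h.neg_one_zpow]; norm_num
  have key : ∀ n : ℤ, d n = d 0 * (-1 : ℝ) ^ n ∧
      (-1 : ℝ) ^ n * a n = a 0 + 7 / 4 * d 0 * (n : ℝ) ∧
      b n = b 0 + (n : ℝ) * (-2 * b 0 - 16 * c 0) ∧
      c n = c 0 + (n : ℝ) * (b 0 / 4 + 2 * c 0) := by
    intro n
    induction n using Int.induction_on with
    | zero => norm_num
    | succ k ih =>
      obtain ⟨hd, ha, hb, hc⟩ := ih
      have hp2 : ((-1 : ℝ) ^ (k : ℤ)) * ((-1 : ℝ) ^ (k : ℤ)) = 1 := by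
        rw [← mul_zpow]; norm_num
      have hz : (-1 : ℝ) ^ ((k : ℤ) + 1) = (-1 : ℝ) ^ (k : ℤ) * (-1) := by
        rw [zpow_add_one₀ hne]
      refine ⟨?_, ?_, ?_, ?_⟩
      · rw [hz]; linear_combination h1 k - hd
      · rw [hz]
        linear_combination (norm := (push_cast; ring1)) ha - ((-1 : ℝ) ^ (k : ℤ)) * h3 k
          - 7 / 4 * ((-1 : ℝ) ^ (k : ℤ)) * h1 k
          + 7 / 4 * ((-1 : ℝ) ^ (k : ℤ)) * hd + 7 / 4 * d 0 * hp2
      · linear_combination (norm := (push_cast; ring1)) h2 k - hb - 16 * hc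
      · linear_combination (norm := (push_cast; ring1)) h4 k - (1 / 4) * h2 k + 3 * hc + (1 / 4) * hb
    | pred k ih =>
      obtain ⟨hd, ha, hb, hc⟩ := ih
      have e : (-(k : ℤ) - 1) + 1 = -(k : ℤ) := by ring
      have h1' := h1 (-(k : ℤ) - 1); rw [e] at h1'
      have h2' := h2 (-(k : ℤ) - 1); rw [e] at h2'
      have h3' := h3 (-(k : ℤ) - 1); rw [e] at h3'
      have h4' := h4 (-(k : ℤ) - 1); rw [e] at h4'
      have hp2 : ((-1 : ℝ) ^ (-(k : ℤ))) * ((-1 : ℝ) ^ (-(k : ℤ))) = 1 := by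
        rw [← mul_zpow]; norm_num
      have hz : (-1 : ℝ) ^ (-(k : ℤ) - 1) = (-1 : ℝ) ^ (-(k : ℤ)) * (-1) := by
        rw [zpow_sub_one₀ hne]; norm_num
      refine ⟨?_, ?_, ?_, ?_⟩
      · rw [hz]; linear_combination h1' - hd
      · rw [hz]
        linear_combination (norm := (push_cast; ring1)) ha - ((-1 : ℝ) ^ (-(k : ℤ))) * h3'
          - 7 / 4 * ((-1 : ℝ) ^ (-(k : ℤ))) * hd - 7 / 4 * d 0 * hp2
      · linear_combination (norm := (push_cast; ring1)) h2' - 16 * h4' + 3 * hb + 16 * hc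
      · linear_combination (norm := (push_cast; ring1)) h4' - hc - (1 / 4) * hb
  constructor
  · rintro ⟨C, hC⟩
    have haC : ∀ n : ℤ, |a n| ≤ C := fun n => by
      have := hC n
      linarith [abs_nonneg (d n), abs_nonneg (c n), abs_nonneg (b n)]
    have hbC : ∀ n : ℤ, |b n| ≤ C := fun n => by
      have := hC n
      linarith [abs_nonneg (d n), abs_nonneg (c n), abs_nonneg (a n)]
    have hd0 : d 0 = 0 := by
      by_contra hd0
      have hpos : (0 : ℝ) < 7 / 4 * |d 0| := by
        have := abs_pos.mpr hd0; linarith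
      obtain ⟨n, hn⟩ := exists_nat_gt ((C + |a 0|) / (7 / 4 * |d 0|))
      rw [div_lt_iff₀ hpos] at hn
      have hk := (key (n : ℤ)).2.1
      have hap : |(-1 : ℝ) ^ ((n : ℤ)) * a (n : ℤ)| = |a (n : ℤ)| := by
        rw [abs_mul, habs1, one_mul]
      have h5 : |a 0 + 7 / 4 * d 0 * ((n : ℤ) : ℝ)| ≤ C := by
        rw [← hk, hap]; exact haC _
      have h6 : |(7 / 4 * d 0 * ((n : ℤ) : ℝ))| = 7 / 4 * |d 0| * (n : ℝ) := by
        rw [abs_mul, abs_mul]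
        rw [abs_of_nonneg (by norm_num : (0:ℝ) ≤ 7/4)]
        push_cast
        rw [abs_of_nonneg (by positivity : (0:ℝ) ≤ (n : ℝ))]
      have h7 : |(7 / 4 * d 0 * ((n : ℤ) : ℝ))| ≤
          |a 0 + 7 / 4 * d 0 * ((n : ℤ) : ℝ)| + |a 0| := by
        calc |(7 / 4 * d 0 * ((n : ℤ) : ℝ))|
            = |(a 0 + 7 / 4 * d 0 * ((n : ℤ) : ℝ)) + (-a 0)| := by ring_nf
          _ ≤ |a 0 + 7 / 4 * d 0 * ((n : ℤ) : ℝ)| + |(-a 0)| := abs_add_le _ _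
          _ = _ := by rw [abs_neg]
      rw [h6] at h7; linarith
    have hK : -2 * b 0 - 16 * c 0 = 0 := by
      by_contra hK
      have hKne : |(-2 * b 0 - 16 * c 0)| > 0 := abs_pos.mpr hK
      obtain ⟨n, hn⟩ := exists_nat_gt ((C + |b 0|) / |(-2 * b 0 - 16 * c 0)|)
      rw [div_lt_iff₀ hKne] at hn
      have hk := (key (n : ℤ)).2.2.1
      have h5 : |b 0 + ((n : ℤ) : ℝ) * (-2 * b 0 - 16 * c 0)| ≤ C := by
        rw [← hk]; exact hbC _
      have h6 : |(((n : ℤ) : ℝ) * (-2 * b 0 - 16 * c 0))| =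
          (n : ℝ) * |(-2 * b 0 - 16 * c 0)| := by
        rw [abs_mul]; push_cast
        rw [abs_of_nonneg (by positivity : (0:ℝ) ≤ (n : ℝ))]
      have h7 : |(((n : ℤ) : ℝ) * (-2 * b 0 - 16 * c 0))| ≤
          |b 0 + ((n : ℤ) : ℝ) * (-2 * b 0 - 16 * c 0)| + |b 0| := by
        calc |(((n : ℤ) : ℝ) * (-2 * b 0 - 16 * c 0))|
            = |(b 0 + ((n : ℤ) : ℝ) * (-2 * b 0 - 16 * c 0)) + (-b 0)| := by ring_nf
          _ ≤ _ + |(-b 0)| := abs_add_le _ _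
          _ = _ := by rw [abs_neg]
      rw [h6] at h7; linarith
    refine ⟨a 0, b 0, fun n => ?_⟩
    obtain ⟨hd, ha, hb, hc⟩ := key n
    have hp2 : ((-1 : ℝ) ^ n) * ((-1 : ℝ) ^ n) = 1 := by
      rw [← mul_zpow]; norm_num
    refine ⟨?_, ?_, ?_, ?_⟩
    · linear_combination ((-1 : ℝ) ^ n) * ha - (a n) * hp2
        + (7 / 4 * ((n : ℤ) : ℝ) * ((-1 : ℝ) ^ n)) * hd0
    · rw [hd, hd0, zero_mul]
    · linear_combination hc + (-(1 / 16) - ((n : ℤ) : ℝ) / 8) * hK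
    · linear_combination hb + ((n : ℤ) : ℝ) * hK
  · rintro ⟨A, B, hAB⟩
    refine ⟨|A| + 0 + |B| / 8 + |B|, fun n => ?_⟩
    obtain ⟨ha, hd, hc, hb⟩ := hAB n
    rw [ha, hd, hc, hb, abs_mul, habs1, abs_mul]
    rw [abs_zero]
    have : |(-1 / 8 : ℝ)| = 1 / 8 := by norm_num
    rw [this]
    ring_nf
    rfl
end
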